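/- (Diophantine core of Theorem 4.11, k = 1 and k = 15 cases.) For each k ∈ {1, 15}, the integer solutions (d, m) of the equation (2d+3)² − 16(2m+1)² + 8km = −7 are exactly the two pairs (0, 0) and (−3, 0). -/
import Mathlib

lemma no_sq_between (a x : ℤ) (ha : 0 ≤ a) (h1 : a ^ 2 < x ^ 2)
    (h2 : x ^ 2 < (a + 1) ^ 2) : False := by
  have hy : 0 ≤ |x| := abs_nonneg x
  have hx2 : |x| ^ 2 = x ^ 2 := sq_abs x
  have h3 : a < |x| := by nlinarith
  have h4 : |x| < a + 1 := by
    by_contra h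
    push_neg at h
    nlinarith
  omega

/-- Diophantine core of Theorem 4.11, `k = 1` and `k = 15` cases: for
`k ∈ {1, 15}`, the integer solutions of `(2d+3)² - 16(2m+1)² + 8km = -7` are
exactly `(0,0)` and `(-3,0)`. -/
theorem diophantine_16_k_one_fifteen (k : ℤ) (hk : k ∈ ({1, 15} : Set ℤ)) (d m : ℤ) :
    (2 * d + 3) ^ 2 - 16 * (2 * m + 1) ^ 2 + 8 * k * m = -7 ↔
      (d, m) ∈ ({(0, 0), (-3, 0)} : Set (ℤ × ℤ)) := by
  simp only [Set.mem_insert_iff, Set.mem_singleton_iff] at hk ⊢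
  constructor
  · intro h
    have hm : m = 0 := by
      rcases hk with hk | hk <;> subst hk <;>
        rcases lt_trichotomy m 0 with hm | hm | hm
      · exfalso
        exact no_sq_between (-(8 * m + 4)) (2 * d + 3) (by linarith)
          (by nlinarith) (by nlinarith)
      · exact hm
      · exfalso
        exact no_sq_between (8 * m + 3) (2 * d + 3) (by linarith)
          (by nlinarith) (by nlinarith)
      · exfalso
        exact no_sq_between (3 - 8 * m) (2 * d + 3) (by linarith)
          (by nlinarith) (by nlinarith)
      · exact hm
      · exfalso
        exact no_sq_between (8 * m - 4) (2 * d + 3) (by linarith)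
          (by nlinarith) (by nlinarith)
    subst hm
    have hd : d * (d + 3) = 0 := by nlinarith
    rcases mul_eq_zero.mp hd with h0 | h0
    · left; simp [h0]
    · right
      have : d = -3 := by linarith
      simp [this]
  · rintro (h | h) <;> rw [Prod.ext_iff] at h <;>
      obtain ⟨h1, h2⟩ := h <;> subst h1 <;> subst h2 <;> ring
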